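/- Consider the multi-user coded caching model with a single popularity level (L = 1) having N ∈ ℕ+ files, K ∈ ℕ+ caches, and U ∈ ℕ+ users per cache. For every real M with 0 ≤ M ≤ N, the pair (R^SL(M, K, N, U), M) is achievable, where R^SL(M, K, N, U) = U·min{N/M, K}·(1 − M/N) for 0 < M ≤ N and R^SL(0, K, N, U) = U·K. -/

import Mathlib

/-- A library: each level `i` has `N i` files, and each file is an arbitrary
element of `{0,1}^F`. -/
def MULibrary (L : ℕ) (N : Fin L → ℕ+) (F : ℕ) : Type :=
  (i : Fin L) → Fin (N i) → Fin F → Bool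

/-- A demand vector of the multi-user setup: each of the `U i` users of level `i`
attached to cache `k` demands one file index of level `i`. -/
def MUDemand (L : ℕ) (N U : Fin L → ℕ+) (K : ℕ+) : Type :=
  (i : Fin L) → Fin K → Fin (U i) → Fin (N i)

/-- The pair `(R, M)` is achievable in the multi-user multi-level coded caching model
with `L` levels, `N i` files and `U i` users per cache for level `i`, and `K` caches:
`R, M ≥ 0` and, for every `ε > 0`, there are a file size `F` and a scheme consisting of
placement maps `Z k` into a set of cardinality at most `2^(M·F)`, encoding maps `X d`
into a set of cardinality at most `2^((R+ε)·F)`, and decoding maps, such that every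
user correctly recovers its demanded file for every library and every demand vector. -/
def MUAchievable (L : ℕ) (N U : Fin L → ℕ+) (K : ℕ+) (R M : ℝ) : Prop :=
  0 ≤ R ∧ 0 ≤ M ∧
  ∀ ε : ℝ, 0 < ε →
    ∃ (F : ℕ+) (zsize xsize : ℕ)
      (Z : Fin K → MULibrary L N F → Fin zsize)
      (X : MUDemand L N U K → MULibrary L N F → Fin xsize)
      (dec : (i : Fin L) → Fin K → Fin (U i) → MUDemand L N U K →
        Fin xsize → Fin zsize → (Fin F → Bool)),
      (zsize : ℝ) ≤ (2 : ℝ) ^ (M * (F : ℝ)) ∧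
      (xsize : ℝ) ≤ (2 : ℝ) ^ ((R + ε) * (F : ℝ)) ∧
      ∀ (w : MULibrary L N F) (d : MUDemand L N U K)
        (i : Fin L) (k : Fin K) (u : Fin (U i)),
        dec i k u d (X d w) (Z k w) = w i (d i k u)

/-- `R*(M)`: the optimal rate of the multi-user setup,
i.e. the infimum of the rates `R` such that `(R, M)` is achievable. -/
noncomputable def RstarMU (L : ℕ) (N U : Fin L → ℕ+) (K : ℕ+) (M : ℝ) : ℝ :=
  sInf {R | MUAchievable L N U K R M}

/-- The single-level achievable rate
`R^SL(m, K, N, U) = U · min{N/m, K} · (1 − m/N)` for `0 < m ≤ N`, and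
`R^SL(0, K, N, U) = U · K`. -/
noncomputable def RSL (m : ℝ) (K : ℕ+) (N U : ℝ) : ℝ :=
  if m = 0 then U * (K : ℝ) else U * min (N / m) (K : ℝ) * (1 - m / N)

section Counting

lemma count_mem_card_subsets {α : Type*} [Fintype α] [DecidableEq α] (m : ℕ) (k : α) :
    (Fintype.card {T : Finset α // T.card = m ∧ k ∈ T}) * Fintype.card α
      = (Fintype.card α).choose m * m := by
  have hfil : Finset.univ.filter (fun T : Finset α => T.card = m ∧ k ∈ T)
      = (Finset.univ.powersetCard m).filter (fun T => k ∈ T) := by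
    ext T
    simp [Finset.mem_powersetCard, Finset.subset_univ, and_assoc]
  rw [Fintype.card_subtype, hfil]
  -- now count the filtered powersetCard
  cases m with
  | zero =>
    have : ((Finset.univ.powersetCard 0).filter (fun T : Finset α => k ∈ T)) = ∅ := by
      ext T
      simp only [Finset.mem_filter, Finset.mem_powersetCard, Finset.notMem_empty, iff_false]
      rintro ⟨⟨-, hc⟩, hk⟩
      exact absurd (Finset.card_eq_zero.mp hc ▸ hk) (Finset.notMem_empty k)
    rw [this]; simp
  | succ m =>
    have hK : 0 < Fintype.card α := Fintype.card_pos_iff.mpr ⟨k⟩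
    have hcard : ((Finset.univ.powersetCard (m+1)).filter (fun T => k ∈ T)).card
        = ((Finset.univ.erase k).powersetCard m).card := by
      apply Finset.card_bij (fun T _ => T.erase k)
      · intro T hT
        rw [Finset.mem_filter, Finset.mem_powersetCard] at hT
        rw [Finset.mem_powersetCard]
        exact ⟨Finset.erase_subset_erase k hT.1.1,
          by rw [Finset.card_erase_of_mem hT.2, hT.1.2]; rfl⟩
      · intro T₁ h₁ T₂ h₂ h
        rw [Finset.mem_filter] at h₁ h₂
        rw [← Finset.insert_erase h₁.2, h, Finset.insert_erase h₂.2]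
      · intro T' hT'
        rw [Finset.mem_powersetCard] at hT'
        have hk : k ∉ T' := fun h => (Finset.mem_erase.mp (hT'.1 h)).1 rfl
        refine ⟨insert k T', ?_, Finset.erase_insert hk⟩
        rw [Finset.mem_filter, Finset.mem_powersetCard]
        exact ⟨⟨Finset.subset_univ _, by rw [Finset.card_insert_of_notMem hk, hT'.2]⟩,
          Finset.mem_insert_self k T'⟩
    rw [hcard, Finset.card_powersetCard, Finset.card_erase_of_mem (Finset.mem_univ k),
      Finset.card_univ, mul_comm]
    have := Nat.add_one_mul_choose_eq (Fintype.card α - 1) m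
    rw [Nat.sub_add_cancel hK] at this
    exact this

end Counting

section Component

variable {κ ν : Type*} [Fintype κ] [DecidableEq κ]

/-- cache content type for the `m`-th MAN component with `sm`-bit subfiles -/
abbrev CT (κ : Type*) (ν : Type*) (m sm : ℕ) (k : κ) : Type _ :=
  {T : Finset κ // T.card = m ∧ k ∈ T} → ν → Fin sm → ZMod 2

/-- placement -/
def place {m sm : ℕ} (g : ν → {T : Finset κ // T.card = m} → Fin sm → ZMod 2) (k : κ) :
    CT κ ν m sm k :=
  fun T f b => g f ⟨T.1, T.2.1⟩ b

/-- auxiliary total version of `g` -/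
def gaux {m sm : ℕ} (g : ν → {T : Finset κ // T.card = m} → Fin sm → ZMod 2)
    (T : Finset κ) (f : ν) (b : Fin sm) : ZMod 2 :=
  if h : T.card = m then g f ⟨T, h⟩ b else 0

/-- broadcast transmissions of the `m`-th MAN component for one round `dd` -/
def bcst {m sm : ℕ} (g : ν → {T : Finset κ // T.card = m} → Fin sm → ZMod 2) (dd : κ → ν) :
    {S : Finset κ // S.card = m+1} → Fin sm → ZMod 2 :=
  fun S b => ∑ j ∈ S.1.attach, gaux g (S.1.erase j.1) (dd j.1) b

/-- decoding -/
def decode {m sm : ℕ} (k : κ) (dd : κ → ν)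
    (bc : {S : Finset κ // S.card = m+1} → Fin sm → ZMod 2) (ct : CT κ ν m sm k) :
    {T : Finset κ // T.card = m} → Fin sm → ZMod 2 :=
  fun T b =>
    if hk : k ∈ T.1 then ct ⟨T.1, T.2, hk⟩ (dd k) b
    else
      bc ⟨insert k T.1, by rw [Finset.card_insert_of_notMem hk, T.2]⟩ b -
        ∑ j ∈ T.1.attach,
          ct ⟨(insert k T.1).erase j.1,
            by rw [Finset.card_erase_of_mem (Finset.mem_insert_of_mem j.2),
                Finset.card_insert_of_notMem hk, T.2]; rfl,
              Finset.mem_erase.mpr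
                ⟨fun h => hk (h ▸ j.2), Finset.mem_insert_self k T.1⟩⟩ (dd j.1) b

lemma decode_correct {m sm : ℕ} (g : ν → {T : Finset κ // T.card = m} → Fin sm → ZMod 2)
    (k : κ) (dd : κ → ν) (T : {T : Finset κ // T.card = m}) (b : Fin sm) :
    decode k dd (bcst g dd) (place g k) T b = g (dd k) T b := by
  rw [decode]
  split
  · rfl
  · next hk =>
    rw [bcst]
    have hmem : ∀ j : {x // x ∈ T.1},
        ((insert k T.1).erase j.1).card = m ∧ k ∈ (insert k T.1).erase j.1 := fun j =>
      ⟨by rw [Finset.card_erase_of_mem (Finset.mem_insert_of_mem j.2),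
          Finset.card_insert_of_notMem hk, T.2]; rfl,
       Finset.mem_erase.mpr ⟨fun h => hk (h ▸ j.2), Finset.mem_insert_self k T.1⟩⟩
    have hsub : ∀ j : {x // x ∈ T.1},
        place g k ⟨(insert k T.1).erase j.1, hmem j⟩ (dd j.1) b
          = gaux g ((insert k T.1).erase j.1) (dd j.1) b := by
      intro j
      rw [place, gaux, dif_pos (hmem j).1]
    calc (∑ j ∈ (insert k T.1).attach, gaux g ((insert k T.1).erase j.1) (dd j.1) b)
          - ∑ j ∈ T.1.attach, place g k ⟨(insert k T.1).erase j.1, hmem j⟩ (dd j.1) b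
        = (∑ j ∈ insert k T.1, gaux g ((insert k T.1).erase j) (dd j) b)
          - ∑ j ∈ T.1, gaux g ((insert k T.1).erase j) (dd j) b := by
          rw [Finset.sum_attach _ (fun j => gaux g ((insert k T.1).erase j) (dd j) b),
            Finset.sum_congr rfl (fun j _ => hsub j),
            Finset.sum_attach _ (fun j => gaux g ((insert k T.1).erase j) (dd j) b)]
      _ = gaux g ((insert k T.1).erase k) (dd k) b := by
          rw [Finset.sum_insert hk, add_sub_cancel_right]
      _ = g (dd k) T b := by
          rw [Finset.erase_insert hk, gaux, dif_pos T.2]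

end Component
section SchemeExists

lemma scheme_exists (N K U : ℕ+) (t s s' : ℕ) :
    ∃ (nz : ℕ)
      (Z : Fin K → MULibrary 1 (fun _ => N) ((K:ℕ).choose t * s + (K:ℕ).choose (t+1) * s')
        → Fin (2^nz))
      (X : MUDemand 1 (fun _ => N) (fun _ => U) K
        → MULibrary 1 (fun _ => N) ((K:ℕ).choose t * s + (K:ℕ).choose (t+1) * s')
        → Fin (2^((U:ℕ)*((K:ℕ).choose (t+1) * s + (K:ℕ).choose (t+2) * s'))))
      (dec : (i : Fin 1) → Fin K → Fin U → MUDemand 1 (fun _ => N) (fun _ => U) K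
        → Fin (2^((U:ℕ)*((K:ℕ).choose (t+1) * s + (K:ℕ).choose (t+2) * s'))) → Fin (2^nz)
        → (Fin ((K:ℕ).choose t * s + (K:ℕ).choose (t+1) * s') → Bool)),
      nz * (K:ℕ) = (N:ℕ) * ((K:ℕ).choose t * t * s + (K:ℕ).choose (t+1) * (t+1) * s') ∧
      ∀ w d i k u, dec i k u d (X d w) (Z k w) = w i (d i k u) := by
  classical
  set F' : ℕ := (K:ℕ).choose t * s + (K:ℕ).choose (t+1) * s' with hF'
  have hcardBit : Fintype.card
      (({T : Finset (Fin (K:ℕ)) // T.card = t} × Fin s)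
        ⊕ ({T : Finset (Fin (K:ℕ)) // T.card = t+1} × Fin s')) = F' := by
    rw [Fintype.card_sum, Fintype.card_prod, Fintype.card_prod, Fintype.card_finset_len,
      Fintype.card_finset_len, Fintype.card_fin, Fintype.card_fin, Fintype.card_fin]
  have e : (({T : Finset (Fin (K:ℕ)) // T.card = t} × Fin s)
      ⊕ ({T : Finset (Fin (K:ℕ)) // T.card = t+1} × Fin s')) ≃ Fin F' :=
    Fintype.equivFinOfCardEq hcardBit
  -- subfile views of a library
  set g1 : MULibrary 1 (fun _ => N) F' → Fin (N:ℕ)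
      → {T : Finset (Fin (K:ℕ)) // T.card = t} → Fin s → ZMod 2 :=
    fun w f T b => if w 0 f (e (Sum.inl (T, b))) then 1 else 0 with hg1
  set g2 : MULibrary 1 (fun _ => N) F' → Fin (N:ℕ)
      → {T : Finset (Fin (K:ℕ)) // T.card = t+1} → Fin s' → ZMod 2 :=
    fun w f T b => if w 0 f (e (Sum.inr (T, b))) then 1 else 0 with hg2
  -- cache content counting
  set a1 : ℕ := Fintype.card {T : Finset (Fin (K:ℕ)) // T.card = t ∧ (0 : Fin (K:ℕ)) ∈ T}
    with ha1
  set a2 : ℕ := Fintype.card {T : Finset (Fin (K:ℕ)) // T.card = t+1 ∧ (0 : Fin (K:ℕ)) ∈ T}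
    with ha2
  have hcount : ∀ (m : ℕ) (k : Fin (K:ℕ)),
      (Fintype.card {T : Finset (Fin (K:ℕ)) // T.card = m ∧ k ∈ T}) * (K:ℕ)
        = (K:ℕ).choose m * m := by
    intro m k
    have := count_mem_card_subsets m k
    rwa [Fintype.card_fin] at this
  have hcnt1 : ∀ k : Fin (K:ℕ),
      Fintype.card {T : Finset (Fin (K:ℕ)) // T.card = t ∧ k ∈ T} = a1 := by
    intro k
    exact Nat.eq_of_mul_eq_mul_right K.2 ((hcount t k).trans (hcount t 0).symm)
  have hcnt2 : ∀ k : Fin (K:ℕ),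
      Fintype.card {T : Finset (Fin (K:ℕ)) // T.card = t+1 ∧ k ∈ T} = a2 := by
    intro k
    exact Nat.eq_of_mul_eq_mul_right K.2 ((hcount (t+1) k).trans (hcount (t+1) 0).symm)
  set nz : ℕ := a1 * ((N:ℕ) * s) + a2 * ((N:ℕ) * s') with hnz
  have hcache : ∀ k : Fin (K:ℕ),
      Fintype.card (CT (Fin (K:ℕ)) (Fin (N:ℕ)) t s k × CT (Fin (K:ℕ)) (Fin (N:ℕ)) (t+1) s' k)
        = 2 ^ nz := by
    intro k
    rw [Fintype.card_prod, Fintype.card_fun, Fintype.card_fun, Fintype.card_fun,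
      Fintype.card_fun, Fintype.card_fun, Fintype.card_fun, ZMod.card,
      Fintype.card_fin, Fintype.card_fin, Fintype.card_fin, hcnt1 k, hcnt2 k, hnz]
    simp only [← pow_mul, ← pow_add]
    congr 1
    ring
  have hBC : Fintype.card (Fin (U:ℕ) →
      ({S : Finset (Fin (K:ℕ)) // S.card = t+1} → Fin s → ZMod 2)
        × ({S : Finset (Fin (K:ℕ)) // S.card = t+2} → Fin s' → ZMod 2))
      = 2 ^ ((U:ℕ)*((K:ℕ).choose (t+1) * s + (K:ℕ).choose (t+2) * s')) := by
    rw [Fintype.card_fun, Fintype.card_prod, Fintype.card_fun, Fintype.card_fun,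
      Fintype.card_fun, Fintype.card_fun, ZMod.card, Fintype.card_fin, Fintype.card_fin,
      Fintype.card_fin, Fintype.card_finset_len, Fintype.card_finset_len, Fintype.card_fin]
    simp only [← pow_mul, ← pow_add]
    congr 1
    ring
  refine ⟨nz,
    fun k w => (Fintype.equivFinOfCardEq (hcache k)) (place (g1 w) k, place (g2 w) k),
    fun d w => (Fintype.equivFinOfCardEq hBC)
      (fun u => (bcst (g1 w) (fun j => d 0 j u), bcst (g2 w) (fun j => d 0 j u))),
    fun i k u d xv zv fb =>
      Sum.elim
        (fun Tb => decide (decode k (fun j => d 0 j u)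
          (((Fintype.equivFinOfCardEq hBC).symm xv) u).1
          ((Fintype.equivFinOfCardEq (hcache k)).symm zv).1 Tb.1 Tb.2 = 1))
        (fun Tb => decide (decode k (fun j => d 0 j u)
          (((Fintype.equivFinOfCardEq hBC).symm xv) u).2
          ((Fintype.equivFinOfCardEq (hcache k)).symm zv).2 Tb.1 Tb.2 = 1))
        (e.symm fb), ?_, ?_⟩
  · rw [hnz]
    have h1 := hcount t 0
    have h2 := hcount (t+1) 0
    rw [← ha1] at h1
    rw [← ha2] at h2
    calc (a1 * ((N:ℕ) * s) + a2 * ((N:ℕ) * s')) * (K:ℕ)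
        = (a1 * (K:ℕ)) * ((N:ℕ) * s) + (a2 * (K:ℕ)) * ((N:ℕ) * s') := by ring
      _ = ((K:ℕ).choose t * t) * ((N:ℕ) * s) + ((K:ℕ).choose (t+1) * (t+1)) * ((N:ℕ) * s') := by
          rw [h1, h2]
      _ = (N:ℕ) * ((K:ℕ).choose t * t * s + (K:ℕ).choose (t+1) * (t+1) * s') := by ring
  · intro w d i k u
    have hi : i = 0 := Subsingleton.elim i 0
    subst hi
    funext fb
    simp only [Equiv.symm_apply_apply]
    rcases hsym : e.symm fb with ⟨T, b⟩ | ⟨T, b⟩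
    · rw [Sum.elim_inl]
      rw [decode_correct (g1 w) k (fun j => d 0 j u) T b]
      have hfb : e (Sum.inl (T, b)) = fb := by rw [← hsym, Equiv.apply_symm_apply]
      simp only [hg1, hfb]
      cases h : w 0 (d 0 k u) fb <;> simp [h]
    · rw [Sum.elim_inr]
      rw [decode_correct (g2 w) k (fun j => d 0 j u) T b]
      have hfb : e (Sum.inr (T, b)) = fb := by rw [← hsym, Equiv.apply_symm_apply]
      simp only [hg2, hfb]
      cases h : w 0 (d 0 k u) fb <;> simp [h]

end SchemeExists

set_option maxHeartbeats 4000000 in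
/-- In the multi-user coded caching model with a single popularity level (`L = 1`),
`N` files, `K` caches and `U` users per cache, for every `0 ≤ M ≤ N` the pair
`(R^SL(M, K, N, U), M)` is achievable. -/
theorem single_level_rate_achievable (N K U : ℕ+) (M : ℝ)
    (hM0 : 0 ≤ M) (hMN : M ≤ ((N : ℕ) : ℝ)) :
    MUAchievable 1 (fun _ => N) (fun _ => U) K
      (RSL M K ((N : ℕ) : ℝ) ((U : ℕ) : ℝ)) M := by
  have hKpos : (0:ℝ) < ((K:ℕ):ℝ) := by exact_mod_cast K.pos
  have hNpos : (0:ℝ) < ((N:ℕ):ℝ) := by exact_mod_cast N.pos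
  have hUpos : (0:ℝ) < ((U:ℕ):ℝ) := by exact_mod_cast U.pos
  have hK1 : (1:ℝ) ≤ ((K:ℕ):ℝ) := by exact_mod_cast K.one_le
  set R : ℝ := RSL M K ((N:ℕ):ℝ) ((U:ℕ):ℝ) with hRdef
  have hR0 : 0 ≤ R := by
    rw [hRdef, RSL]
    split_ifs with h
    · positivity
    · have hMpos : 0 < M := lt_of_le_of_ne hM0 (Ne.symm h)
      have h1 : M / ((N:ℕ):ℝ) ≤ 1 := (div_le_one hNpos).mpr hMN
      have hmin : 0 ≤ min (((N:ℕ):ℝ)/M) ((K:ℕ):ℝ) := le_min (by positivity) hKpos.le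
      have := mul_nonneg (mul_nonneg hUpos.le hmin) (by linarith : (0:ℝ) ≤ 1 - M/((N:ℕ):ℝ))
      linarith
  refine ⟨hR0, hM0, ?_⟩
  intro ε hε
  -- parameter choice
  set x : ℝ := ((K:ℕ):ℝ) * M / ((N:ℕ):ℝ) with hxdef
  have hx0 : 0 ≤ x := by positivity
  have hxN : x * ((N:ℕ):ℝ) = ((K:ℕ):ℝ) * M := by
    rw [hxdef]; field_simp
  have hxK : x ≤ ((K:ℕ):ℝ) := by
    rw [hxdef, div_le_iff₀ hNpos]
    nlinarith
  set t : ℕ := min (Nat.floor x) ((K:ℕ) - 1) with htdef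
  have htK : t + 1 ≤ (K:ℕ) := by
    have h1 : t ≤ (K:ℕ) - 1 := min_le_right _ _
    have h2 : 1 ≤ (K:ℕ) := K.one_le
    omega
  have htKR : ((t:ℕ):ℝ) + 1 ≤ ((K:ℕ):ℝ) := by exact_mod_cast htK
  have ht_le : ((t:ℕ):ℝ) ≤ x := by
    calc ((t:ℕ):ℝ) ≤ ((Nat.floor x : ℕ):ℝ) := by
          exact_mod_cast min_le_left (Nat.floor x) ((K:ℕ) - 1)
      _ ≤ x := Nat.floor_le hx0
  have hx_le : x ≤ ((t:ℕ):ℝ) + 1 := by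
    by_cases hc : Nat.floor x ≤ (K:ℕ) - 1
    · have ht' : t = Nat.floor x := min_eq_left hc
      rw [ht']
      exact (Nat.lt_floor_add_one x).le
    · push_neg at hc
      have ht' : t = (K:ℕ) - 1 := min_eq_right hc.le
      have h2 : 1 ≤ (K:ℕ) := K.one_le
      have : ((t:ℕ):ℝ) + 1 = ((K:ℕ):ℝ) := by
        rw [ht']
        have : ((K:ℕ) - 1) + 1 = (K:ℕ) := by omega
        exact_mod_cast congrArg (Nat.cast : ℕ → ℝ) this
      rw [this]; exact hxK
  set q : ℕ := max 1 (Nat.ceil (((U:ℕ):ℝ) * (((K:ℕ):ℝ)+1) / (2*ε))) with hqdef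
  have hq1 : 1 ≤ q := le_max_left _ _
  have hq0 : (0:ℝ) < (q:ℝ) := by exact_mod_cast hq1
  have hqbig : ((U:ℕ):ℝ) * (((K:ℕ):ℝ)+1) ≤ 2*ε*(q:ℝ) := by
    have h1 : ((U:ℕ):ℝ) * (((K:ℕ):ℝ)+1) / (2*ε) ≤
        ((Nat.ceil (((U:ℕ):ℝ) * (((K:ℕ):ℝ)+1) / (2*ε)) : ℕ):ℝ) := Nat.le_ceil _
    have h2 : ((Nat.ceil (((U:ℕ):ℝ) * (((K:ℕ):ℝ)+1) / (2*ε)) : ℕ):ℝ) ≤ (q:ℝ) := by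
      rw [hqdef]
      exact_mod_cast le_max_right 1 (Nat.ceil (((U:ℕ):ℝ) * (((K:ℕ):ℝ)+1) / (2*ε)))
    rw [div_le_iff₀ (by positivity)] at h1
    nlinarith
  set δ : ℝ := ((t:ℕ):ℝ) + 1 - x with hδdef
  have hδ0 : 0 ≤ δ := by rw [hδdef]; linarith
  have hδ1 : δ ≤ 1 := by rw [hδdef]; linarith
  set p : ℕ := Nat.ceil (δ * (q:ℝ)) with hpdef
  have hplo : δ * (q:ℝ) ≤ (p:ℝ) := Nat.le_ceil _
  have hphi : (p:ℝ) ≤ δ * (q:ℝ) + 1 := (Nat.ceil_lt_add_one (by positivity)).le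
  have hpq : p ≤ q := by
    rw [hpdef]
    exact Nat.ceil_le.mpr (by nlinarith)
  have hqp : ((q - p : ℕ):ℝ) = (q:ℝ) - (p:ℝ) := by
    push_cast [Nat.cast_sub hpq]; ring
  -- the scheme
  set s : ℕ := p * (K:ℕ).choose (t+1) with hsdef
  set s' : ℕ := (q - p) * (K:ℕ).choose t with hs'def
  obtain ⟨nz, Z, X, dec, hnzK, hcorr⟩ := scheme_exists N K U t s s'
  have hc0 : 0 < (K:ℕ).choose t := Nat.choose_pos (by omega)
  have hc'0 : 0 < (K:ℕ).choose (t+1) := Nat.choose_pos htK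
  have hFeq : (K:ℕ).choose t * s + (K:ℕ).choose (t+1) * s'
      = (K:ℕ).choose t * (K:ℕ).choose (t+1) * q := by
    rw [hsdef, hs'def]
    have hq' : p + (q - p) = q := by omega
    calc (K:ℕ).choose t * (p * (K:ℕ).choose (t+1)) + (K:ℕ).choose (t+1) * ((q-p) * (K:ℕ).choose t)
        = (K:ℕ).choose t * (K:ℕ).choose (t+1) * (p + (q - p)) := by ring
      _ = (K:ℕ).choose t * (K:ℕ).choose (t+1) * q := by rw [hq']
  have hFpos : 0 < (K:ℕ).choose t * s + (K:ℕ).choose (t+1) * s' := by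
    rw [hFeq]
    exact Nat.mul_pos (Nat.mul_pos hc0 hc'0) hq1
  refine ⟨⟨(K:ℕ).choose t * s + (K:ℕ).choose (t+1) * s', hFpos⟩, 2^nz,
    2^((U:ℕ)*((K:ℕ).choose (t+1) * s + (K:ℕ).choose (t+2) * s')), Z, X, dec, ?_, ?_,
    fun w d i k u => hcorr w d i k u⟩
  · -- memory constraint
    have hFcast : (((K:ℕ).choose t * s + (K:ℕ).choose (t+1) * s' : ℕ):ℝ)
        = ((K:ℕ).choose t : ℝ) * ((K:ℕ).choose (t+1) : ℝ) * (q:ℝ) := by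
      rw [hFeq]; push_cast; ring
    have hnzKR : (nz:ℝ) * ((K:ℕ):ℝ)
        = ((N:ℕ):ℝ) * (((K:ℕ).choose t : ℝ) * (t:ℝ) * (s:ℝ)
          + ((K:ℕ).choose (t+1) : ℝ) * ((t:ℝ)+1) * (s':ℝ)) := by
      exact_mod_cast congrArg (Nat.cast : ℕ → ℝ) hnzK
    have hscast : (s:ℝ) = (p:ℝ) * ((K:ℕ).choose (t+1) : ℝ) := by
      rw [hsdef]; push_cast; ring
    have hs'cast : (s':ℝ) = ((q:ℝ) - (p:ℝ)) * ((K:ℕ).choose t : ℝ) := by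
      rw [hs'def]; push_cast [Nat.cast_sub hpq]; ring
    have hcoremem : ((N:ℕ):ℝ) * ((t:ℝ)*(p:ℝ) + ((t:ℝ)+1)*((q:ℝ)-(p:ℝ)))
        ≤ ((K:ℕ):ℝ) * M * (q:ℝ) := by
      have h1 : ((N:ℕ):ℝ) * (δ * (q:ℝ)) ≤ ((N:ℕ):ℝ) * (p:ℝ) :=
        mul_le_mul_of_nonneg_left hplo hNpos.le
      rw [hδdef] at h1
      have h2x : x * ((N:ℕ):ℝ) * (q:ℝ) = ((K:ℕ):ℝ) * M * (q:ℝ) := by rw [hxN]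
      nlinarith [h1, h2x]
    have key : (nz:ℝ) ≤ M * (((K:ℕ).choose t * s + (K:ℕ).choose (t+1) * s' : ℕ):ℝ) := by
      have h2 : (nz:ℝ) * ((K:ℕ):ℝ)
          ≤ M * (((K:ℕ).choose t * s + (K:ℕ).choose (t+1) * s' : ℕ):ℝ) * ((K:ℕ):ℝ) := by
        rw [hnzKR, hFcast, hscast, hs'cast]
        have hcc : (0:ℝ) ≤ ((K:ℕ).choose t : ℝ) * ((K:ℕ).choose (t+1) : ℝ) := by positivity
        nlinarith [mul_le_mul_of_nonneg_left hcoremem hcc]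
      exact le_of_mul_le_mul_right h2 hKpos

    calc ((2^nz : ℕ):ℝ) = (2:ℝ)^(nz:ℕ) := by push_cast; ring
      _ = (2:ℝ)^((nz:ℕ):ℝ) := (Real.rpow_natCast 2 nz).symm
      _ ≤ (2:ℝ)^(M * (((K:ℕ).choose t * s + (K:ℕ).choose (t+1) * s' : ℕ):ℝ)) :=
          (Real.rpow_le_rpow_left_iff one_lt_two).mpr key
  · -- rate constraint
    have hFcast : (((K:ℕ).choose t * s + (K:ℕ).choose (t+1) * s' : ℕ):ℝ)
        = ((K:ℕ).choose t : ℝ) * ((K:ℕ).choose (t+1) : ℝ) * (q:ℝ) := by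
      rw [hFeq]; push_cast; ring
    have hscast : (s:ℝ) = (p:ℝ) * ((K:ℕ).choose (t+1) : ℝ) := by
      rw [hsdef]; push_cast; ring
    have hs'cast : (s':ℝ) = ((q:ℝ) - (p:ℝ)) * ((K:ℕ).choose t : ℝ) := by
      rw [hs'def]; push_cast [Nat.cast_sub hpq]; ring
    -- choose identities
    have hid1 : ((K:ℕ).choose (t+1) : ℝ) * ((t:ℝ)+1)
        = ((K:ℕ).choose t : ℝ) * (((K:ℕ):ℝ) - (t:ℝ)) := by
      have := Nat.choose_succ_right_eq (K:ℕ) t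
      have hcast := congrArg (Nat.cast : ℕ → ℝ) this
      push_cast [Nat.cast_sub (by omega : t ≤ (K:ℕ))] at hcast
      linarith
    have hid2 : ((K:ℕ).choose (t+2) : ℝ) * ((t:ℝ)+2)
        = ((K:ℕ).choose (t+1) : ℝ) * (((K:ℕ):ℝ) - (t:ℝ) - 1) := by
      have := Nat.choose_succ_right_eq (K:ℕ) (t+1)
      have hcast := congrArg (Nat.cast : ℕ → ℝ) this
      push_cast [Nat.cast_sub htK] at hcast
      linarith
    -- the chord inequality
    have hchord : ((U:ℕ):ℝ)*((1-(x-(t:ℝ)))*(((K:ℕ):ℝ)-(t:ℝ))*((t:ℝ)+2)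
          + (x-(t:ℝ))*(((K:ℕ):ℝ)-(t:ℝ)-1)*((t:ℝ)+1))
        ≤ R*((t:ℝ)+1)*((t:ℝ)+2) := by
      rcases eq_or_lt_of_le hM0 with hMz | hMpos
      · -- M = 0
        have hx : x = 0 := by rw [hxdef, ← hMz]; ring
        have ht0 : t = 0 := by
          rw [htdef]
          have : Nat.floor x = 0 := by rw [hx]; simp
          rw [this]
          exact Nat.zero_min _
        have hRval : R = ((U:ℕ):ℝ) * ((K:ℕ):ℝ) := by rw [hRdef, RSL, if_pos hMz.symm]
        rw [hRval, ht0, hx]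
        push_cast
        exact le_of_eq (by ring)
      · -- M > 0
        have hMne : M ≠ 0 := ne_of_gt hMpos
        have hRval : R = ((U:ℕ):ℝ) * min (((N:ℕ):ℝ)/M) ((K:ℕ):ℝ) * (1 - M/((N:ℕ):ℝ)) := by
          rw [hRdef, RSL, if_neg hMne]
        have h1MN : 1 - M/((N:ℕ):ℝ) = (((K:ℕ):ℝ) - x)/((K:ℕ):ℝ) := by
          rw [hxdef]
          field_simp
        rcases Nat.eq_zero_or_pos t with ht0 | htpos
        · -- t = 0
          have hx1 : x ≤ 1 := by
            rw [ht0] at hx_le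
            simpa using hx_le
          have hmin : min (((N:ℕ):ℝ)/M) ((K:ℕ):ℝ) = ((K:ℕ):ℝ) := by
            apply min_eq_right
            rw [le_div_iff₀ hMpos]
            nlinarith
          rw [hRval, hmin, h1MN, ht0]
          have hKx : ((U:ℕ):ℝ) * ((K:ℕ):ℝ) * ((((K:ℕ):ℝ) - x)/((K:ℕ):ℝ))
              = ((U:ℕ):ℝ) * (((K:ℕ):ℝ) - x) := by
            field_simp
          rw [hKx]
          push_cast
          nlinarith [mul_nonneg (mul_nonneg hUpos.le hx0)
            (by linarith : (0:ℝ) ≤ ((K:ℕ):ℝ) - 1)]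
        · -- t ≥ 1
          have ht1 : (1:ℝ) ≤ (t:ℝ) := by exact_mod_cast htpos
          have hx1 : (1:ℝ) ≤ x := le_trans ht1 ht_le
          have hxpos : (0:ℝ) < x := by linarith
          have hmin : min (((N:ℕ):ℝ)/M) ((K:ℕ):ℝ) = ((N:ℕ):ℝ)/M := by
            apply min_eq_left
            rw [div_le_iff₀ hMpos]
            nlinarith
          have hNMx : ((N:ℕ):ℝ)/M = ((K:ℕ):ℝ)/x := by
            rw [div_eq_div_iff hMpos.ne' hxpos.ne']
            linarith [hxN]
          rw [hRval, hmin, hNMx, h1MN]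
          have hsimp : ((U:ℕ):ℝ) * (((K:ℕ):ℝ)/x) * ((((K:ℕ):ℝ) - x)/((K:ℕ):ℝ))
              = ((U:ℕ):ℝ) * (((K:ℕ):ℝ) - x) / x := by
            field_simp
          rw [hsimp, div_mul_eq_mul_div, div_mul_eq_mul_div, le_div_iff₀ hxpos]
          have hEnn : (0:ℝ) ≤ ((U:ℕ):ℝ) * ((((K:ℕ):ℝ)+1)*(x - (t:ℝ) - 1)^2
              + ((t:ℝ)+1)*(((K:ℕ):ℝ)-(t:ℝ)-1)) := by
            apply mul_nonneg hUpos.le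
            apply add_nonneg
            · exact mul_nonneg (by linarith) (sq_nonneg _)
            · exact mul_nonneg (by positivity) (by linarith)
          have hident : ((U:ℕ):ℝ) * (((K:ℕ):ℝ) - x) * ((t:ℝ)+1) * ((t:ℝ)+2)
              - ((U:ℕ):ℝ)*((1-(x-(t:ℝ)))*(((K:ℕ):ℝ)-(t:ℝ))*((t:ℝ)+2)
                + (x-(t:ℝ))*(((K:ℕ):ℝ)-(t:ℝ)-1)*((t:ℝ)+1)) * x
              = ((U:ℕ):ℝ) * ((((K:ℕ):ℝ)+1)*(x - (t:ℝ) - 1)^2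
                + ((t:ℝ)+1)*(((K:ℕ):ℝ)-(t:ℝ)-1)) := by ring
          linarith [hEnn, hident]
    -- slack: from the chord at x to the rational point p/q
    have hcore : ((U:ℕ):ℝ)*((p:ℝ)*(((K:ℕ):ℝ)-(t:ℝ))*((t:ℝ)+2)
          + ((q:ℝ)-(p:ℝ))*(((K:ℕ):ℝ)-(t:ℝ)-1)*((t:ℝ)+1))
        ≤ (R+ε)*(q:ℝ)*((t:ℝ)+1)*((t:ℝ)+2) := by
      have hr0 : 0 ≤ (p:ℝ) - δ*(q:ℝ) := by linarith
      have hr1 : (p:ℝ) - δ*(q:ℝ) ≤ 1 := by linarith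
      have hUK : (0:ℝ) ≤ ((U:ℕ):ℝ) * (((K:ℕ):ℝ)+1) := by positivity
      have h2q : 2*ε*(q:ℝ) ≤ ε*(q:ℝ)*((t:ℝ)+1)*((t:ℝ)+2) := by
        have hnn : (0:ℝ) ≤ ε*(q:ℝ)*((t:ℝ)*(t:ℝ)+3*(t:ℝ)) := by positivity
        nlinarith [hnn]
      have hidc : ((U:ℕ):ℝ)*((p:ℝ)*(((K:ℕ):ℝ)-(t:ℝ))*((t:ℝ)+2)
            + ((q:ℝ)-(p:ℝ))*(((K:ℕ):ℝ)-(t:ℝ)-1)*((t:ℝ)+1))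
          = (q:ℝ)*(((U:ℕ):ℝ)*((1-(x-(t:ℝ)))*(((K:ℕ):ℝ)-(t:ℝ))*((t:ℝ)+2)
            + (x-(t:ℝ))*(((K:ℕ):ℝ)-(t:ℝ)-1)*((t:ℝ)+1)))
            + ((U:ℕ):ℝ)*((p:ℝ)-δ*(q:ℝ))*(((K:ℕ):ℝ)+1) := by
        rw [hδdef]; ring
      have hm1 := mul_le_mul_of_nonneg_left hchord hq0.le
      have hm2 := mul_le_mul_of_nonneg_left hr1 hUK
      have hm3 := mul_le_mul_of_nonneg_left hr0 hUK
      linarith [hm1, hm2, hm3, hqbig, h2q, hidc]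
    -- assemble
    have hEid : ((((U:ℕ)*((K:ℕ).choose (t+1) * s + (K:ℕ).choose (t+2) * s') : ℕ)):ℝ)
          * (((t:ℝ)+1)*((t:ℝ)+2))
        = ((K:ℕ).choose t : ℝ) * ((K:ℕ).choose (t+1) : ℝ)
          * (((U:ℕ):ℝ)*((p:ℝ)*(((K:ℕ):ℝ)-(t:ℝ))*((t:ℝ)+2)
            + ((q:ℝ)-(p:ℝ))*(((K:ℕ):ℝ)-(t:ℝ)-1)*((t:ℝ)+1))) := by
      push_cast
      rw [hscast, hs'cast]
      linear_combination (((U:ℕ):ℝ) * ((K:ℕ).choose (t+1) : ℝ) * ((t:ℝ)+2) * (p:ℝ)) * hid1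
        + (((U:ℕ):ℝ) * ((K:ℕ).choose t : ℝ) * ((t:ℝ)+1) * ((q:ℝ)-(p:ℝ))) * hid2
    have hT2pos : (0:ℝ) < ((t:ℝ)+1)*((t:ℝ)+2) := by positivity
    have hgoal : ((((U:ℕ)*((K:ℕ).choose (t+1) * s + (K:ℕ).choose (t+2) * s') : ℕ)):ℝ)
        ≤ (R+ε) * (((K:ℕ).choose t * s + (K:ℕ).choose (t+1) * s' : ℕ):ℝ) := by
      have hcc : (0:ℝ) ≤ ((K:ℕ).choose t : ℝ) * ((K:ℕ).choose (t+1) : ℝ) := by positivity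
      have h3 := mul_le_mul_of_nonneg_left hcore hcc
      apply le_of_mul_le_mul_right _ hT2pos
      rw [hEid, hFcast]
      linarith [h3]

    calc ((2^((U:ℕ)*((K:ℕ).choose (t+1) * s + (K:ℕ).choose (t+2) * s')) : ℕ):ℝ)
        = (2:ℝ)^((U:ℕ)*((K:ℕ).choose (t+1) * s + (K:ℕ).choose (t+2) * s') : ℕ) := by
          push_cast; ring
      _ = (2:ℝ)^((((U:ℕ)*((K:ℕ).choose (t+1) * s + (K:ℕ).choose (t+2) * s') : ℕ)):ℝ) :=
          (Real.rpow_natCast 2 _).symm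
      _ ≤ (2:ℝ)^((R+ε) * (((K:ℕ).choose t * s + (K:ℕ).choose (t+1) * s' : ℕ):ℝ)) :=
          (Real.rpow_le_rpow_left_iff one_lt_two).mpr hgoal
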